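/- Let p ≥ 1 and for each i ∈ {1, …, p} let g_{i,1}, …, g_{i,q_i} be nonzero real numbers. Then the iterated limit lim_{ζ→∞} lim_{s→∞} tanh(ζ · ∑_{i=1}^{p} ∏_{j=1}^{q_i} σ_s(g_{i,j})) equals 1 if there exists i with g_{i,j} < 0 for all j, and equals 0 otherwise; i.e., the smoothed GRASHS switching function converges to the 0/1 indicator of the DNF condition ⋁_i ⋀_j (g_{i,j} < 0). -/

import Mathlib

open Filter

/-- The sigmoid function with slope parameter `s`. -/
noncomputable def sigmoid (s x : ℝ) : ℝ := 1 / (1 + Real.exp (s * x))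

lemma sigmoid_tendsto (x : ℝ) (hx : x ≠ 0) :
    Tendsto (fun s : ℝ => sigmoid s x) atTop (nhds (if x < 0 then 1 else 0)) := by
  rcases hx.lt_or_gt with h | h
  · simp only [if_pos h]
    have h1 : Tendsto (fun s : ℝ => s * x) atTop atBot :=
      tendsto_id.atTop_mul_const_of_neg h
    have h2 : Tendsto (fun s : ℝ => Real.exp (s * x)) atTop (nhds 0) :=
      Real.tendsto_exp_atBot.comp h1
    have h3 : Tendsto (fun s : ℝ => 1 + Real.exp (s * x)) atTop (nhds 1) := by
      simpa using tendsto_const_nhds.add h2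
    have := (tendsto_const_nhds (x := (1:ℝ)) (f := atTop (α := ℝ))).div h3 one_ne_zero
    simpa [Pi.div_def, sigmoid] using this
  · simp only [if_neg (not_lt.mpr h.le)]
    have h1 : Tendsto (fun s : ℝ => s * x) atTop atTop :=
      tendsto_id.atTop_mul_const h
    have h2 : Tendsto (fun s : ℝ => 1 + Real.exp (s * x)) atTop atTop :=
      tendsto_atTop_add_const_left _ _ (Real.tendsto_exp_atTop.comp h1)
    simpa [sigmoid] using h2.inv_tendsto_atTop.congr (fun s => (one_div _).symm)

lemma tanh_tendsto_atTop : Tendsto Real.tanh atTop (nhds 1) := by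
  have key : ∀ x : ℝ, Real.tanh x = (1 - Real.exp (-2 * x)) / (1 + Real.exp (-2 * x)) := by
    intro x
    rw [Real.tanh_eq_sinh_div_cosh, Real.sinh_eq, Real.cosh_eq,
      show (-2 : ℝ) * x = -x + -x by ring, Real.exp_add, Real.exp_neg]
    have hx := Real.exp_pos x
    field_simp
  have h1 : Tendsto (fun x : ℝ => Real.exp (-2 * x)) atTop (nhds 0) := by
    apply Real.tendsto_exp_atBot.comp
    exact (tendsto_id (α := ℝ)).const_mul_atTop_of_neg (by norm_num)
  have h2 : Tendsto (fun x : ℝ => (1 - Real.exp (-2 * x)) / (1 + Real.exp (-2 * x)))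
      atTop (nhds 1) := by
    have hA : Tendsto (fun x : ℝ => 1 - Real.exp (-2 * x)) atTop (nhds (1 - 0)) :=
      tendsto_const_nhds.sub h1
    have hB : Tendsto (fun x : ℝ => 1 + Real.exp (-2 * x)) atTop (nhds (1 + 0)) :=
      tendsto_const_nhds.add h1
    have := hA.div hB (by norm_num)
    simpa [Pi.div_def] using this
  exact h2.congr fun x => (key x).symm

theorem grashs_switching_iterated_limit (p : ℕ) (hp : 1 ≤ p)
    (q : Fin p → ℕ) (g : (i : Fin p) → Fin (q i) → ℝ)
    (hg : ∀ i j, g i j ≠ 0) :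
    ∃ L : ℝ → ℝ,
      (∀ ζ : ℝ, Tendsto
        (fun s : ℝ => Real.tanh (ζ * ∑ i : Fin p, ∏ j : Fin (q i), sigmoid s (g i j)))
        atTop (nhds (L ζ))) ∧
      Tendsto L atTop
        (nhds (if (∃ i : Fin p, ∀ j : Fin (q i), g i j < 0) then 1 else 0)) := by
  set c : ℝ := ∑ i : Fin p, ∏ j : Fin (q i), (if g i j < 0 then (1:ℝ) else 0) with hc
  refine ⟨fun ζ => Real.tanh (ζ * c), ?_, ?_⟩
  · intro ζ
    have hsum : Tendsto
        (fun s : ℝ => ∑ i : Fin p, ∏ j : Fin (q i), sigmoid s (g i j)) atTop (nhds c) := by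
      apply tendsto_finset_sum
      intro i _
      exact tendsto_finset_prod _ fun j _ => sigmoid_tendsto (g i j) (hg i j)
    have hcont : Continuous Real.tanh := by
      have he : Real.tanh = fun x => Real.sinh x / Real.cosh x :=
        funext fun x => Real.tanh_eq_sinh_div_cosh x
      rw [he]
      exact Real.continuous_sinh.div Real.continuous_cosh fun x => (Real.cosh_pos x).ne'
    exact (hcont.tendsto _).comp (tendsto_const_nhds.mul hsum)
  · have hterm : ∀ i : Fin p,
        (∏ j : Fin (q i), (if g i j < 0 then (1:ℝ) else 0))
          = if (∀ j : Fin (q i), g i j < 0) then 1 else 0 := by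
      intro i
      by_cases h : ∀ j : Fin (q i), g i j < 0
      · rw [if_pos h]
        exact Finset.prod_eq_one fun j _ => if_pos (h j)
      · push_neg at h
        obtain ⟨j, hj⟩ := h
        rw [if_neg]
        · exact Finset.prod_eq_zero (Finset.mem_univ j) (if_neg (not_lt.mpr hj))
        · push_neg; exact ⟨j, hj⟩
    by_cases hE : ∃ i : Fin p, ∀ j : Fin (q i), g i j < 0
    · rw [if_pos hE]
      obtain ⟨i₀, hi₀⟩ := hE
      have hcpos : 0 < c := by
        rw [hc]
        apply Finset.sum_pos'
        · intro i _
          rw [hterm i]; positivity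
        · exact ⟨i₀, Finset.mem_univ _, by rw [hterm i₀, if_pos hi₀]; norm_num⟩
      have : Tendsto (fun ζ : ℝ => ζ * c) atTop atTop :=
        tendsto_id.atTop_mul_const hcpos
      exact tanh_tendsto_atTop.comp this
    · rw [if_neg hE]
      have hc0 : c = 0 := by
        rw [hc]
        apply Finset.sum_eq_zero
        intro i _
        rw [hterm i, if_neg]
        intro h; exact hE ⟨i, h⟩
      simp only [hc0, mul_zero, Real.tanh_zero]
      exact tendsto_const_nhds
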